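/- For the test function F̄: ℕ → ℝ defined by F̄(α) = z^{-1/4} e^{-z^{3/4}(α-1)} for α ≥ 1 and F̄(0) = F̄(1), there exist constants c, C > 0 independent of z ∈ (0,1) such that: (i) c z^{1/4} ≤ Σ_{α ≥ 1} (F̄(α+1) - F̄(α))² ≤ C z^{1/4}; (ii) F̄(1) = z^{-1/4}; (iii) c z^{-1/4} ≤ z Σ_{α ∈ ℕ} F̄(α)² ≤ C z^{-1/4}. -/

import Mathlib

open Real

/-- The test function `F̄(α) = z^{-1/4} e^{-z^{3/4}(α-1)}` for `α ≥ 1`, `F̄(0) = F̄(1)`. -/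
noncomputable def Fbar (z : ℝ) (α : ℕ) : ℝ :=
  if α = 0 then z ^ (-(1/4 : ℝ))
  else z ^ (-(1/4 : ℝ)) * Real.exp (-(z ^ ((3:ℝ)/4)) * ((α : ℝ) - 1))

lemma Fbar_succ (z : ℝ) (α : ℕ) :
    Fbar z (α + 1) = z ^ (-(1/4 : ℝ)) * (Real.exp (-(z ^ ((3:ℝ)/4)))) ^ α := by
  simp only [Fbar, Nat.succ_ne_zero, if_false]
  rw [← Real.exp_nat_mul]
  congr 1
  push_cast
  ring

set_option maxHeartbeats 1000000 in
/-- Estimates for the test function: Dirichlet form of order `z^{1/4}`, `F̄(1) = z^{-1/4}`, and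
`z Σ F̄² ` of order `z^{-1/4}`, uniformly in `z ∈ (0,1)`. -/
theorem stmt15 :
    ∃ c C : ℝ, 0 < c ∧ 0 < C ∧ ∀ z ∈ Set.Ioo (0:ℝ) 1,
      (c * z ^ ((1:ℝ)/4) ≤ ∑' α : ℕ, (Fbar z (α + 2) - Fbar z (α + 1)) ^ 2 ∧
        (∑' α : ℕ, (Fbar z (α + 2) - Fbar z (α + 1)) ^ 2) ≤ C * z ^ ((1:ℝ)/4)) ∧
      Fbar z 1 = z ^ (-(1/4 : ℝ)) ∧
      (c * z ^ (-(1/4 : ℝ)) ≤ z * ∑' α : ℕ, (Fbar z α) ^ 2 ∧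
        z * (∑' α : ℕ, (Fbar z α) ^ 2) ≤ C * z ^ (-(1/4 : ℝ))) := by
  refine ⟨1/4, 3, by norm_num, by norm_num, ?_⟩
  rintro z ⟨hz0, hz1⟩
  set A := z ^ (-(1/4 : ℝ)) with hA
  set w := z ^ ((3:ℝ)/4) with hw
  set r := Real.exp (-w) with hr
  have hA0 : 0 < A := rpow_pos_of_pos hz0 _
  have hw0 : 0 < w := rpow_pos_of_pos hz0 _
  have hw1 : w < 1 := rpow_lt_one hz0.le hz1 (by norm_num)
  have hr0 : 0 < r := exp_pos _
  have hr1 : r < 1 := by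
    rw [hr, exp_lt_one_iff]; linarith
  -- bounds on s := 1 - r
  set s := 1 - r with hs
  have hs0 : 0 < s := by simp only [hs]; linarith
  have hs1 : s < 1 := by simp only [hs]; linarith
  have hsw : s ≤ w := by
    have := Real.add_one_le_exp (-w)
    simp only [hs, hr]; linarith
  have hws : w / 2 ≤ s := by
    have h1 : r ≤ (1 + w)⁻¹ := by
      rw [hr, Real.exp_neg]
      exact inv_anti₀ (by linarith) (by linarith [Real.add_one_le_exp w])
    have h2 : (1 + w)⁻¹ ≤ 1 - w / 2 := by
      rw [inv_le_iff_one_le_mul₀ (by linarith)]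
      nlinarith
    simp only [hs]; linarith
  -- rpow arithmetic
  have hA2 : A ^ 2 = z ^ (-(1/2 : ℝ)) := by
    rw [hA, ← rpow_natCast (z ^ _) 2, ← rpow_mul hz0.le]; norm_num
  have hAw : z ^ (-(1/2 : ℝ)) * w = z ^ ((1:ℝ)/4) := by
    rw [hw, ← rpow_add hz0]; norm_num
  have hzA2 : z * z ^ (-(1/2 : ℝ)) = z ^ ((1:ℝ)/2) := by
    nth_rewrite 1 [← rpow_one z]
    rw [← rpow_add hz0]; norm_num
  have hzhw : z ^ ((1:ℝ)/2) / w = z ^ (-(1/4 : ℝ)) := by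
    rw [hw, div_eq_iff (ne_of_gt hw0), ← rpow_add hz0]; norm_num
  have hz12 : z ^ ((1:ℝ)/2) ≤ 1 := rpow_le_one hz0.le hz1.le (by norm_num)
  have hz14 : (1:ℝ) ≤ z ^ (-(1/4 : ℝ)) :=
    one_le_rpow_of_pos_of_le_one_of_nonpos hz0 hz1.le (by norm_num)
  have hu0 : (0:ℝ) < z ^ (-(1/2 : ℝ)) := rpow_pos_of_pos hz0 _
  have hq0 : (0:ℝ) < z ^ ((1:ℝ)/4) := rpow_pos_of_pos hz0 _
  -- first tsum
  have hterm : ∀ α : ℕ, (Fbar z (α + 2) - Fbar z (α + 1)) ^ 2 = (A * s) ^ 2 * (r ^ 2) ^ α := by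
    intro α
    have h2 : (α : ℕ) + 2 = (α + 1) + 1 := rfl
    rw [h2, Fbar_succ, Fbar_succ, ← hA, ← hw, ← hr, pow_succ]
    have : (r ^ 2) ^ α = (r ^ α) ^ 2 := by rw [← pow_mul, ← pow_mul, mul_comm]
    rw [this, hs]; ring
  have hr2 : r ^ 2 < 1 := by nlinarith
  have hr20 : (0:ℝ) ≤ r ^ 2 := sq_nonneg r
  have hS1 : (∑' α : ℕ, (Fbar z (α + 2) - Fbar z (α + 1)) ^ 2)
      = (A * s) ^ 2 * (1 - r ^ 2)⁻¹ := by
    rw [tsum_congr hterm, tsum_mul_left, tsum_geometric_of_lt_one hr20 hr2]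
  -- 1 - r^2 = s * (2 - s)
  have hfac : 1 - r ^ 2 = s * (2 - s) := by simp only [hs]; ring
  have h2s0 : 0 < 2 - s := by linarith
  have hden0 : 0 < 1 - r ^ 2 := by rw [hfac]; positivity
  have hS1' : (∑' α : ℕ, (Fbar z (α + 2) - Fbar z (α + 1)) ^ 2)
      = z ^ (-(1/2 : ℝ)) * (s / (2 - s)) := by
    rw [hS1, hfac, mul_pow, hA2]
    rw [mul_assoc]
    congr 1
    rw [mul_inv, sq]
    field_simp
  constructor
  · rw [hS1']
    constructor
    · have h1 : w / 4 ≤ s / (2 - s) := by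
        calc w / 4 = (w / 2) / 2 := by ring
        _ ≤ s / (2 - s) := div_le_div₀ hs0.le hws h2s0 (by linarith)
      calc (1/4 : ℝ) * z ^ ((1:ℝ)/4) = z ^ (-(1/2 : ℝ)) * (w / 4) := by
            rw [← hAw]; ring
      _ ≤ z ^ (-(1/2 : ℝ)) * (s / (2 - s)) := by
            exact mul_le_mul_of_nonneg_left h1 hu0.le
    · have h1 : s / (2 - s) ≤ w := by
        calc s / (2 - s) ≤ s / 1 := div_le_div₀ hs0.le le_rfl one_pos (by linarith)
        _ = s := div_one s
        _ ≤ w := hsw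
      calc z ^ (-(1/2 : ℝ)) * (s / (2 - s)) ≤ z ^ (-(1/2 : ℝ)) * w :=
            mul_le_mul_of_nonneg_left h1 hu0.le
      _ = z ^ ((1:ℝ)/4) := hAw
      _ ≤ 3 * z ^ ((1:ℝ)/4) := by linarith
  refine ⟨by simp [Fbar, hA], ?_⟩
  -- second tsum
  have hterm2 : ∀ α : ℕ, (Fbar z (α + 1)) ^ 2 = A ^ 2 * (r ^ 2) ^ α := by
    intro α
    rw [Fbar_succ, ← hA, ← hr]
    rw [show (r ^ 2) ^ α = (r ^ α) ^ 2 by rw [← pow_mul, ← pow_mul, mul_comm]]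
    ring
  have hsum : Summable (fun α : ℕ => (Fbar z α) ^ 2) := by
    rw [← summable_nat_add_iff 1]
    exact ((summable_geometric_of_lt_one hr20 hr2).mul_left (A ^ 2)).congr
      (fun n => (hterm2 n).symm)
  have hS2 : (∑' α : ℕ, (Fbar z α) ^ 2)
      = z ^ (-(1/2 : ℝ)) * (1 + (s * (2 - s))⁻¹) := by
    rw [hsum.tsum_eq_zero_add]
    have h0 : Fbar z 0 = A := by simp [Fbar, hA]
    rw [tsum_congr hterm2, tsum_mul_left, tsum_geometric_of_lt_one hr20 hr2, h0,
      ← hfac, hA2]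
    ring
  rw [hS2, ← mul_assoc, hzA2]
  have hsd : s * (2 - s) ≤ 2 * w := by nlinarith
  have hsd' : w / 2 ≤ s * (2 - s) := by nlinarith
  have hsd0 : 0 < s * (2 - s) := by positivity
  have hq12 : (0:ℝ) < z ^ ((1:ℝ)/2) := rpow_pos_of_pos hz0 _
  constructor
  · have h1 : (2 * w)⁻¹ ≤ (s * (2 - s))⁻¹ := inv_anti₀ hsd0 hsd
    have hq4 : (0:ℝ) < z ^ (-(1/4 : ℝ)) := rpow_pos_of_pos hz0 _
    calc (1/4 : ℝ) * z ^ (-(1/4 : ℝ)) ≤ (1/2 : ℝ) * z ^ (-(1/4 : ℝ)) := by linarith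
    _ = z ^ ((1:ℝ)/2) * (0 + (2 * w)⁻¹) := by
          rw [← hzhw, div_eq_mul_inv, mul_inv, zero_add]; ring
    _ ≤ z ^ ((1:ℝ)/2) * (1 + (s * (2 - s))⁻¹) := by
          apply mul_le_mul_of_nonneg_left _ hq12.le
          have : (0:ℝ) ≤ 1 := zero_le_one
          linarith
  · have h1 : (s * (2 - s))⁻¹ ≤ (w / 2)⁻¹ := inv_anti₀ (by positivity) hsd'
    calc z ^ ((1:ℝ)/2) * (1 + (s * (2 - s))⁻¹)
        ≤ z ^ ((1:ℝ)/2) * (1 + (w / 2)⁻¹) := by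
          apply mul_le_mul_of_nonneg_left _ hq12.le; linarith
    _ = z ^ ((1:ℝ)/2) + 2 * (z ^ ((1:ℝ)/2) / w) := by
          rw [inv_div]; ring
    _ = z ^ ((1:ℝ)/2) + 2 * z ^ (-(1/4 : ℝ)) := by rw [hzhw]
    _ ≤ 3 * z ^ (-(1/4 : ℝ)) := by linarith
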